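/- arXiv:1012.4577 — 2 statements merged into one kernel-verified Lean document; each statement's English description precedes it below -/
import Mathlib

section
/- (Corollary 2.) Let L be a lattice in ℂ, let p₁ and p₂ be distinct prime numbers, and let L₁, L₂ ≤ L be sublattices with [L : L₁] = p₁ and [L : L₂] = p₂. Let e₁ be any element of L₁ with e₁ ∉ p₁L, and e₂ any element of L₂ with e₂ ∉ p₂L. Then L₁ ∩ L₂ equals the additive subgroup generated by (p₁p₂)L together with the elements p₁•e₂ and p₂•e₁. -/
open Pointwise

/-- A lattice in ℂ: a discrete additive subgroup spanning ℂ over ℝ. -/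
def IsLattice (L : AddSubgroup ℂ) : Prop :=
  DiscreteTopology L ∧ Submodule.span ℝ (L : Set ℂ) = ⊤

/-- If `[L : L₁] = p` then `p • x ∈ L₁` for every `x ∈ L`. -/
lemma smul_mem_of_relindex {p : ℕ} {L₁ L : AddSubgroup ℂ}
    (hidx : L₁.relIndex L = p) {x : ℂ} (hx : x ∈ L) : (p : ℤ) • x ∈ L₁ := by
  have h := AddSubgroup.nsmul_index_mem (L₁.addSubgroupOf L) ⟨x, hx⟩
  rw [AddSubgroup.mem_addSubgroupOf] at h
  have hidx' : (L₁.addSubgroupOf L).index = p := hidx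
  rw [hidx'] at h
  have hcoe : ((p • (⟨x, hx⟩ : L) : L) : ℂ) = (p : ℤ) • x := by
    push_cast
    rw [natCast_zsmul]
  rwa [hcoe] at h

/-- Key structural lemma: if `[L : L₁] = p` is prime and `e₁ ∈ L₁ \ pL`, then every
element of `L₁` is of the form `a • e₁ + p • y` with `y ∈ L`. -/
lemma exists_repr (L : AddSubgroup ℂ) (hL : IsLattice L) (p : ℕ) (hp : p.Prime)
    (L₁ : AddSubgroup ℂ) (h₁ : L₁ ≤ L) (hidx : L₁.relIndex L = p)
    (e₁ : ℂ) (he₁ : e₁ ∈ L₁) (he₁' : e₁ ∉ (p : ℤ) • L) :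
    ∀ x ∈ L₁, ∃ a : ℤ, ∃ y ∈ L, x = a • e₁ + (p : ℤ) • y := by
  classical
  let M : Submodule ℤ ℂ := L.toIntSubmodule
  haveI : DiscreteTopology M := hL.1
  haveI : IsZLattice ℝ M := ⟨by exact hL.2⟩
  haveI := ZLattice.module_finite ℝ M
  haveI := ZLattice.module_free ℝ M
  have hrank : Module.finrank ℤ M = 2 := by
    rw [ZLattice.rank ℝ M, Complex.finrank_real_complex]
  let b : Module.Basis (Fin 2) ℤ M := (Module.finBasis ℤ M).reindex (finCongr hrank)
  let E : M ≃+ (Fin 2 → ℤ) := b.equivFun.toAddEquiv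
  set P : AddSubgroup M := (p : ℤ) • ⊤ with hP
  have memP : ∀ z : M, z ∈ P ↔ ∃ y : M, (p : ℤ) • y = z := by
    intro z
    rw [hP, AddSubgroup.mem_smul_pointwise_iff_exists]
    simp
  have hPindex : P.index = p ^ 2 := by
    have hsurj : Function.Surjective (E.symm : (Fin 2 → ℤ) →+ M) := E.symm.surjective
    rw [← AddSubgroup.index_comap_of_surjective P hsurj]
    have hcomap : P.comap (E.symm : (Fin 2 → ℤ) →+ M) =
        AddSubgroup.pi Set.univ (fun _ : Fin 2 => AddSubgroup.zmultiples (p : ℤ)) := by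
      ext x
      simp only [AddSubgroup.mem_comap, AddSubgroup.mem_pi, Set.mem_univ, true_implies]
      rw [memP]
      constructor
      · rintro ⟨y, hy⟩ i
        refine AddSubgroup.mem_zmultiples_iff.2 ⟨E y i, ?_⟩
        have h2 : E ((p : ℤ) • y) = x := by rw [hy]; exact E.apply_symm_apply x
        rw [map_zsmul] at h2
        have := congrFun h2 i
        simpa [mul_comm] using this
      · intro h
        choose k hk using fun i => AddSubgroup.mem_zmultiples_iff.1 (h i)
        refine ⟨E.symm k, ?_⟩
        have : (E.symm : (Fin 2 → ℤ) →+ M) ((p : ℤ) • k) = (p : ℤ) • E.symm k := map_zsmul _ _ _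
        rw [← this]
        congr 1
        funext i
        simpa [mul_comm] using hk i
    rw [hcomap, AddSubgroup.index_pi]
    simp [Int.index_zmultiples, sq]
  have hcard : Nat.card (M ⧸ P) = p ^ 2 := hPindex
  haveI : Finite (M ⧸ P) := Nat.finite_of_card_ne_zero (by
    rw [hcard]; exact pow_ne_zero 2 hp.ne_zero)
  set H : AddSubgroup M := AddSubgroup.comap M.subtype.toAddMonoidHom L₁ with hH
  have hHindex : H.index = p := hidx
  have hPH : P ≤ H := by
    intro z hz
    obtain ⟨y, hy⟩ := (memP z).1 hz
    have hmem : (p : ℤ) • (y : ℂ) ∈ L₁ := smul_mem_of_relindex hidx y.2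
    have : ((z : ℂ)) = (p : ℤ) • (y : ℂ) := by rw [← hy]; push_cast; ring
    show (z : ℂ) ∈ L₁
    rw [this]; exact hmem
  let mk : M →+ (M ⧸ P) := QuotientAddGroup.mk' P
  have hker : mk.ker = P := QuotientAddGroup.ker_mk' P
  let e₁M : M := ⟨e₁, h₁ he₁⟩
  have he₁H : e₁M ∈ H := he₁
  have hmkne : mk e₁M ≠ 0 := by
    intro h0
    have hmem : e₁M ∈ P := by rwa [← hker, AddMonoidHom.mem_ker]
    obtain ⟨y, hy⟩ := (memP _).1 hmem
    apply he₁'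
    refine (AddSubgroup.mem_smul_pointwise_iff_exists e₁ ((p : ℤ)) L).2 ⟨(y : ℂ), y.2, ?_⟩
    have := congrArg (Subtype.val) hy
    push_cast at this
    simpa using this
  have hpmk : (p : ℕ) • mk e₁M = 0 := by
    have h3 : (p : ℤ) • e₁M ∈ mk.ker := by rw [hker]; exact (memP _).2 ⟨e₁M, rfl⟩
    rw [AddMonoidHom.mem_ker, map_zsmul, natCast_zsmul] at h3
    exact h3
  have horder : addOrderOf (mk e₁M) = p := by
    have hdvd : addOrderOf (mk e₁M) ∣ p := addOrderOf_dvd_of_nsmul_eq_zero hpmk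
    rcases hp.eq_one_or_self_of_dvd _ hdvd with h | h
    · exact absurd (AddMonoid.addOrderOf_eq_one_iff.1 h) hmkne
    · exact h
  set W : AddSubgroup (M ⧸ P) := H.map mk with hW
  have hzW : AddSubgroup.zmultiples (mk e₁M) ≤ W :=
    AddSubgroup.zmultiples_le.2 ⟨e₁M, he₁H, rfl⟩
  have hWne : W ≠ ⊤ := by
    intro htop
    have hcm : W.comap mk = H ⊔ mk.ker := AddSubgroup.comap_map_eq mk H
    rw [htop, hker, sup_of_le_left hPH] at hcm
    have hHtop : H = ⊤ := by rw [← hcm, AddSubgroup.comap_top]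
    have h1 : H.index = 1 := by rw [hHtop, AddSubgroup.index_top]
    rw [hHindex] at h1
    exact hp.one_lt.ne' h1
  have hcardW_dvd : Nat.card W ∣ p ^ 2 := by
    rw [← hcard]
    have h4 := AddSubgroup.card_dvd_of_le (le_top : W ≤ ⊤)
    rwa [AddSubgroup.card_top] at h4
  have hpdvd : p ∣ Nat.card W := by
    have h1 : Nat.card (AddSubgroup.zmultiples (mk e₁M)) = p := by
      rw [Nat.card_zmultiples, horder]
    exact h1 ▸ AddSubgroup.card_dvd_of_le hzW
  have hWcard_ne : Nat.card W ≠ p ^ 2 := by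
    intro hcw
    exact hWne (AddSubgroup.eq_top_of_card_eq W (by rw [hcw, hcard]))
  have hWcard : Nat.card W = p := by
    obtain ⟨k, hk⟩ := hpdvd
    have hkd : k ∣ p := by
      have h2 : p * k ∣ p * p := by rw [← hk]; rw [sq] at hcardW_dvd; exact hcardW_dvd
      exact (Nat.mul_dvd_mul_iff_left hp.pos).1 h2
    rcases hp.eq_one_or_self_of_dvd _ hkd with h | h
    · rw [hk, h, mul_one]
    · exact absurd (by rw [hk, h, sq]) hWcard_ne
  have hWeq : AddSubgroup.zmultiples (mk e₁M) = W :=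
    AddSubgroup.eq_of_le_of_card_ge hzW
      (by rw [hWcard, Nat.card_zmultiples, horder])
  intro x hx
  let xM : M := ⟨x, h₁ hx⟩
  have hxW : mk xM ∈ W := ⟨xM, hx, rfl⟩
  rw [← hWeq] at hxW
  obtain ⟨a, ha⟩ := AddSubgroup.mem_zmultiples_iff.1 hxW
  have hsub : xM - a • e₁M ∈ P := by
    rw [← hker, AddMonoidHom.mem_ker, map_sub, map_zsmul, ha, sub_self]
  obtain ⟨y, hy⟩ := (memP _).1 hsub
  refine ⟨a, (y : ℂ), y.2, ?_⟩
  have := congrArg (Subtype.val) hy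
  push_cast at this
  have hxy : (p : ℤ) • (y : ℂ) = x - a • e₁ := by simpa using this
  have : x - a • e₁ = (p : ℤ) • (y : ℂ) := hxy.symm
  linear_combination this

/-- (Corollary 2.)  Let `p₁ ≠ p₂` be primes and `L₁, L₂ ≤ L` sublattices with
`[L : L₁] = p₁`, `[L : L₂] = p₂`.  For any `e₁ ∈ L₁ \ p₁L` and `e₂ ∈ L₂ \ p₂L`,
the intersection `L₁ ∩ L₂` equals the subgroup generated by `(p₁p₂)L` together
with `p₁ • e₂` and `p₂ • e₁`. -/
theorem inter_of_distinct_primes_repr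
    (L : AddSubgroup ℂ) (hL : IsLattice L)
    (p₁ p₂ : ℕ) (hp₁ : p₁.Prime) (hp₂ : p₂.Prime) (hne : p₁ ≠ p₂)
    (L₁ L₂ : AddSubgroup ℂ)
    (h₁ : L₁ ≤ L) (h₂ : L₂ ≤ L)
    (hidx₁ : L₁.relIndex L = p₁) (hidx₂ : L₂.relIndex L = p₂)
    (e₁ : ℂ) (he₁ : e₁ ∈ L₁) (he₁' : e₁ ∉ (p₁ : ℤ) • L)
    (e₂ : ℂ) (he₂ : e₂ ∈ L₂) (he₂' : e₂ ∉ (p₂ : ℤ) • L) :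
    L₁ ⊓ L₂ =
      (((p₁ * p₂ : ℕ) : ℤ) • L) ⊔ AddSubgroup.zmultiples ((p₁ : ℤ) • e₂) ⊔
        AddSubgroup.zmultiples ((p₂ : ℤ) • e₁) := by
  set R : AddSubgroup ℂ :=
    (((p₁ * p₂ : ℕ) : ℤ) • L) ⊔ AddSubgroup.zmultiples ((p₁ : ℤ) • e₂) ⊔
      AddSubgroup.zmultiples ((p₂ : ℤ) • e₁) with hR
  have hle1 : (((p₁ * p₂ : ℕ) : ℤ) • L) ≤ R :=
    le_trans le_sup_left le_sup_left
  have hle2 : AddSubgroup.zmultiples ((p₁ : ℤ) • e₂) ≤ R :=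
    le_trans le_sup_right le_sup_left
  have hle3 : AddSubgroup.zmultiples ((p₂ : ℤ) • e₁) ≤ R := le_sup_right
  have hR1 : ∀ w ∈ L, ((p₁ * p₂ : ℕ) : ℤ) • w ∈ R := fun w hw =>
    hle1 (AddSubgroup.smul_mem_pointwise_smul w _ L hw)
  have hR2 : ∀ c : ℤ, c • ((p₁ : ℤ) • e₂) ∈ R := fun c =>
    hle2 (AddSubgroup.mem_zmultiples_iff.2 ⟨c, rfl⟩)
  have hR3 : ∀ c : ℤ, c • ((p₂ : ℤ) • e₁) ∈ R := fun c =>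
    hle3 (AddSubgroup.mem_zmultiples_iff.2 ⟨c, rfl⟩)
  apply le_antisymm
  · -- hard direction
    have key₁ := exists_repr L hL p₁ hp₁ L₁ h₁ hidx₁ e₁ he₁ he₁'
    have key₂ := exists_repr L hL p₂ hp₂ L₂ h₂ hidx₂ e₂ he₂ he₂'
    rintro x ⟨hx₁, hx₂⟩
    obtain ⟨a, y, hy, hxa⟩ := key₁ x hx₁
    obtain ⟨b, z, hz, hxb⟩ := key₂ x hx₂
    have hco : IsCoprime (p₁ : ℤ) (p₂ : ℤ) := by
      rw [Int.isCoprime_iff_gcd_eq_one]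
      exact_mod_cast (Nat.coprime_primes hp₁ hp₂).2 hne
    obtain ⟨s, t, hst⟩ := hco
    have hp₂x : (p₂ : ℤ) • x ∈ R := by
      have hx' : (p₂ : ℤ) • x = a • ((p₂ : ℤ) • e₁) + ((p₁ * p₂ : ℕ) : ℤ) • y := by
        rw [hxa]
        push_cast [zsmul_eq_mul]
        ring
      rw [hx']
      exact R.add_mem (hR3 a) (hR1 y hy)
    have hp₁x : (p₁ : ℤ) • x ∈ R := by
      have hx' : (p₁ : ℤ) • x = b • ((p₁ : ℤ) • e₂) + ((p₁ * p₂ : ℕ) : ℤ) • z := by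
        rw [hxb]
        push_cast [zsmul_eq_mul]
        ring
      rw [hx']
      exact R.add_mem (hR2 b) (hR1 z hz)
    have hxeq : x = s • ((p₁ : ℤ) • x) + t • ((p₂ : ℤ) • x) := by
      push_cast [zsmul_eq_mul]
      have : (s * p₁ + t * p₂ : ℂ) = 1 := by exact_mod_cast congrArg (Int.cast : ℤ → ℂ) hst
      linear_combination (-x) * this
    rw [hxeq]
    exact R.add_mem (R.zsmul_mem hp₁x s) (R.zsmul_mem hp₂x t)
  · -- easy direction
    rw [hR]
    refine sup_le (sup_le ?_ ?_) ?_
    · intro w hw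
      obtain ⟨u, hu, rfl⟩ := (AddSubgroup.mem_smul_pointwise_iff_exists _ _ _).1 hw
      refine AddSubgroup.mem_inf.2 ⟨?_, ?_⟩
      · have : ((p₁ * p₂ : ℕ) : ℤ) • u = (p₁ : ℤ) • ((p₂ : ℤ) • u) := by
          push_cast [zsmul_eq_mul]; ring
        rw [this]
        exact smul_mem_of_relindex hidx₁ (L.zsmul_mem hu _)
      · have : ((p₁ * p₂ : ℕ) : ℤ) • u = (p₂ : ℤ) • ((p₁ : ℤ) • u) := by
          push_cast [zsmul_eq_mul]; ring
        rw [this]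
        exact smul_mem_of_relindex hidx₂ (L.zsmul_mem hu _)
    · refine AddSubgroup.zmultiples_le.2 (AddSubgroup.mem_inf.2 ⟨?_, ?_⟩)
      · exact smul_mem_of_relindex hidx₁ (h₂ he₂)
      · exact L₂.zsmul_mem he₂ _
    · refine AddSubgroup.zmultiples_le.2 (AddSubgroup.mem_inf.2 ⟨?_, ?_⟩)
      · exact L₁.zsmul_mem he₁ _
      · exact smul_mem_of_relindex hidx₂ (h₁ he₁)
end

section
/- Let L be a lattice in ℂ with ℤ-basis (e₁, e₂) and let p be a prime number. Then the sublattices of L of index p are exactly the following p + 1 pairwise distinct subgroups: for each j = 0, 1, …, p−1, the subgroup generated by e₁ + j•e₂ and p•e₂; and the subgroup generated by p•e₁ and e₂. -/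
private lemma relindex_helper {G M : Type*} [AddCommGroup G] [AddCommGroup M]
    (L' L : AddSubgroup G) (f : ↥L →+ M) (hs : Function.Surjective f)
    (hker : ∀ x : ↥L, f x = 0 ↔ (x : G) ∈ L') :
    L'.relIndex L = Nat.card M := by
  have h1 : L'.addSubgroupOf L = f.ker := by
    ext x
    simp only [AddSubgroup.mem_addSubgroupOf, AddMonoidHom.mem_ker]
    exact (hker x).symm
  show (L'.addSubgroupOf L).index = _
  rw [h1, AddSubgroup.index_ker, AddMonoidHom.range_eq_top.mpr hs]
  exact Nat.card_congr AddSubgroup.topEquiv.toEquiv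

/-- Let `L` be a lattice with ℤ-basis `(e₁, e₂)` and `p` a prime.  The sublattices of
`L` of index `p` are exactly the following `p + 1` pairwise distinct subgroups: for
`j = 0, …, p−1` the subgroup generated by `e₁ + j•e₂` and `p•e₂`, and the subgroup
generated by `p•e₁` and `e₂`. -/
theorem prime_index_sublattices_classification
    (L : AddSubgroup ℂ) (hL : IsLattice L)
    (e₁ e₂ : ℂ) (he₁ : e₁ ∈ L) (he₂ : e₂ ∈ L)
    (hspan : ∀ x ∈ L, ∃ a b : ℤ, x = a • e₁ + b • e₂)
    (hindep : ∀ a b : ℤ, a • e₁ + b • e₂ = 0 → a = 0 ∧ b = 0)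
    (p : ℕ) (hp : p.Prime)
    (F : ℕ → AddSubgroup ℂ)
    (hF : ∀ j : ℕ, F j =
      if j < p then AddSubgroup.closure {e₁ + (j : ℤ) • e₂, (p : ℤ) • e₂}
      else AddSubgroup.closure {(p : ℤ) • e₁, e₂}) :
    Set.InjOn F (Set.Iic p) ∧
    {L' : AddSubgroup ℂ | L' ≤ L ∧ L'.relIndex L = p} = F '' Set.Iic p := by
  classical
  haveI : Fact p.Prime := ⟨hp⟩
  have hp2 := hp.two_le
  have hppos : (0:ℤ) < (p:ℤ) := by exact_mod_cast hp.pos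
  -- uniqueness of coordinates
  have uniq : ∀ a b c d : ℤ, a • e₁ + b • e₂ = c • e₁ + d • e₂ → a = c ∧ b = d := by
    intro a b c d h
    have h' : (a - c) • e₁ + (b - d) • e₂ = 0 := by
      simp only [zsmul_eq_mul] at h ⊢
      push_cast
      first
      | linear_combination h
      | linear_combination -(h)
    obtain ⟨h1, h2⟩ := hindep _ _ h'
    omega
  -- coordinate functions
  obtain ⟨A, B, hAB⟩ : ∃ A B : ↥L → ℤ, ∀ x : ↥L, (x : ℂ) = A x • e₁ + B x • e₂ :=
    ⟨fun x => (hspan x x.2).choose, fun x => (hspan x x.2).choose_spec.choose,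
      fun x => (hspan x x.2).choose_spec.choose_spec⟩
  have hcoord : ∀ (x : ↥L) (a b : ℤ), (x : ℂ) = a • e₁ + b • e₂ → A x = a ∧ B x = b :=
    fun x a b h => uniq _ _ _ _ ((hAB x).symm.trans h)
  have hadd : ∀ x y : ↥L, A (x + y) = A x + A y ∧ B (x + y) = B x + B y := by
    intro x y
    refine hcoord _ _ _ ?_
    have : ((x + y : ↥L) : ℂ) = (x : ℂ) + y := rfl
    rw [this, hAB x, hAB y]
    simp only [zsmul_eq_mul]
    push_cast
    ring
  have hE₁ : A ⟨e₁, he₁⟩ = 1 ∧ B ⟨e₁, he₁⟩ = 0 := hcoord _ 1 0 (by simp)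
  have hE₂ : A ⟨e₂, he₂⟩ = 0 ∧ B ⟨e₂, he₂⟩ = 1 := hcoord _ 0 1 (by simp)
  -- modular inverse helper
  have hinv : ∀ a : ℤ, ¬ (p:ℤ) ∣ a → ∃ c k : ℤ, c * a = 1 + (p:ℤ) * k := by
    intro a ha
    have h0 : ((a : ZMod p)) ≠ 0 := by rwa [Ne, ZMod.intCast_zmod_eq_zero_iff_dvd]
    have h1 : ((((((a : ZMod p)⁻¹).val : ℤ)) * a : ℤ) : ZMod p) = 1 := by
      push_cast
      rw [ZMod.natCast_val, ZMod.cast_id]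
      exact inv_mul_cancel₀ h0
    have h2 : (p:ℤ) ∣ ((((a : ZMod p)⁻¹).val : ℤ)) * a - 1 := by
      rw [← ZMod.intCast_zmod_eq_zero_iff_dvd, Int.cast_sub, Int.cast_one, h1, sub_self]
    obtain ⟨k, hk⟩ := h2
    exact ⟨(((a : ZMod p)⁻¹).val : ℤ), k, by linarith⟩
  -- division helper
  have hmod : ∀ z : ℤ, ∃ (j : ℕ) (q : ℤ), j < p ∧ z = (p:ℤ) * q + j := by
    intro z
    have h1 : (0:ℤ) ≤ z % p := Int.emod_nonneg z (by omega)
    have h2 : z % p < p := Int.emod_lt_of_pos z hppos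
    refine ⟨(z % p).toNat, z / p, ?_, ?_⟩
    · omega
    · have h3 : ((z % p).toNat : ℤ) = z % p := Int.toNat_of_nonneg h1
      rw [h3]
      have := Int.mul_ediv_add_emod z p
      linarith
  -- relindex of the three kinds of closures
  have hrelpair : ∀ j : ℕ,
      (AddSubgroup.closure {e₁ + (j:ℤ) • e₂, (p:ℤ) • e₂}).relIndex L = p := by
    intro j
    have h := relindex_helper (AddSubgroup.closure {e₁ + (j:ℤ) • e₂, (p:ℤ) • e₂}) L
      (AddMonoidHom.mk' (fun x : ↥L => ((B x : ZMod p) - (j : ZMod p) * (A x : ZMod p)))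
        (by
          intro x y
          rw [(hadd x y).1, (hadd x y).2]
          push_cast
          ring)) ?_ ?_
    · rw [h, Nat.card_zmod]
    · intro c
      refine ⟨(c.val : ℤ) • ⟨e₂, he₂⟩, ?_⟩
      rw [map_zsmul]
      show (c.val : ℤ) • ((B ⟨e₂, he₂⟩ : ZMod p) - (j : ZMod p) * (A ⟨e₂, he₂⟩ : ZMod p)) = c
      rw [hE₂.1, hE₂.2]
      push_cast
      simp [zsmul_eq_mul, ZMod.natCast_val, ZMod.cast_id]
    · intro x
      show ((B x : ZMod p) - (j : ZMod p) * (A x : ZMod p)) = 0 ↔ _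
      constructor
      · intro h0
        have hdvd : (p : ℤ) ∣ (B x - (j:ℤ) * A x) := by
          rw [← ZMod.intCast_zmod_eq_zero_iff_dvd]
          push_cast
          exact h0
        obtain ⟨n, hn⟩ := hdvd
        rw [AddSubgroup.mem_closure_pair]
        refine ⟨A x, n, ?_⟩
        have hnC : (B x : ℂ) = (j:ℕ) * (A x : ℂ) + (p:ℕ) * (n:ℂ) := by
          have : (B x : ℤ) = (j:ℤ) * A x + (p:ℤ) * n := by linarith
          exact_mod_cast congrArg (fun t : ℤ => (t : ℂ)) this
        rw [hAB x]
        simp only [zsmul_eq_mul]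
        push_cast
        first
        | linear_combination e₂ * hnC
        | linear_combination -(e₂ * hnC)
      · intro hx
        obtain ⟨m, n, hmn⟩ := AddSubgroup.mem_closure_pair.mp hx
        have hx' : (x : ℂ) = m • e₁ + (m * (j:ℤ) + n * (p:ℤ)) • e₂ := by
          rw [← hmn]
          simp only [zsmul_eq_mul]
          push_cast
          ring
        obtain ⟨hA, hB⟩ := hcoord x _ _ hx'
        rw [hA, hB]
        push_cast
        rw [ZMod.natCast_self]
        ring
  have hrellast : (AddSubgroup.closure {(p:ℤ) • e₁, e₂}).relIndex L = p := by
    have h := relindex_helper (AddSubgroup.closure {(p:ℤ) • e₁, e₂}) L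
      (AddMonoidHom.mk' (fun x : ↥L => ((A x : ZMod p)))
        (by intro x y; rw [(hadd x y).1]; push_cast; ring)) ?_ ?_
    · rw [h, Nat.card_zmod]
    · intro c
      refine ⟨(c.val : ℤ) • ⟨e₁, he₁⟩, ?_⟩
      rw [map_zsmul]
      show (c.val : ℤ) • ((A ⟨e₁, he₁⟩ : ZMod p)) = c
      rw [hE₁.1]
      push_cast
      simp [zsmul_eq_mul, ZMod.natCast_val, ZMod.cast_id]
    · intro x
      show ((A x : ZMod p)) = 0 ↔ _
      constructor
      · intro h0
        have hdvd : (p : ℤ) ∣ A x := by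
          exact (ZMod.intCast_zmod_eq_zero_iff_dvd _ _).mp h0
        obtain ⟨n, hn⟩ := hdvd
        rw [AddSubgroup.mem_closure_pair]
        refine ⟨n, B x, ?_⟩
        have hnC : (A x : ℂ) = (p:ℕ) * (n:ℂ) := by exact_mod_cast congrArg (fun t : ℤ => (t : ℂ)) hn
        rw [hAB x]
        simp only [zsmul_eq_mul]
        push_cast
        first
        | linear_combination e₁ * hnC
        | linear_combination -(e₁ * hnC)
      · intro hx
        obtain ⟨m, n, hmn⟩ := AddSubgroup.mem_closure_pair.mp hx
        have hx' : (x : ℂ) = (m * (p:ℤ)) • e₁ + n • e₂ := by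
          rw [← hmn]
          simp only [zsmul_eq_mul]
          push_cast
          ring
        obtain ⟨hA, hB⟩ := hcoord x _ _ hx'
        rw [hA]
        push_cast
        rw [ZMod.natCast_self]
        ring
  have hrelpl : (AddSubgroup.closure {(p:ℤ) • e₁, (p:ℤ) • e₂}).relIndex L = p * p := by
    have h := relindex_helper (AddSubgroup.closure {(p:ℤ) • e₁, (p:ℤ) • e₂}) L
      (AddMonoidHom.mk' (fun x : ↥L => (((A x : ZMod p)), ((B x : ZMod p))))
        (by intro x y; rw [(hadd x y).1, (hadd x y).2]; push_cast; rw [Prod.mk_add_mk]) ) ?_ ?_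
    · rw [h, Nat.card_prod, Nat.card_zmod]
    · intro c
      refine ⟨(c.1.val : ℤ) • ⟨e₁, he₁⟩ + (c.2.val : ℤ) • ⟨e₂, he₂⟩, ?_⟩
      rw [map_add, map_zsmul, map_zsmul]
      show (c.1.val : ℤ) • ((A ⟨e₁, he₁⟩ : ZMod p), (B ⟨e₁, he₁⟩ : ZMod p))
          + (c.2.val : ℤ) • ((A ⟨e₂, he₂⟩ : ZMod p), (B ⟨e₂, he₂⟩ : ZMod p)) = c
      rw [hE₁.1, hE₁.2, hE₂.1, hE₂.2]
      ext <;> simp [zsmul_eq_mul, ZMod.natCast_val, ZMod.cast_id]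
    · intro x
      show (((A x : ZMod p)), ((B x : ZMod p))) = (0 : ZMod p × ZMod p) ↔ _
      rw [Prod.ext_iff]
      constructor
      · rintro ⟨h1, h2⟩
        obtain ⟨m, hm⟩ : (p:ℤ) ∣ A x := by exact (ZMod.intCast_zmod_eq_zero_iff_dvd _ _).mp h1
        obtain ⟨n, hn⟩ : (p:ℤ) ∣ B x := by exact (ZMod.intCast_zmod_eq_zero_iff_dvd _ _).mp h2
        rw [AddSubgroup.mem_closure_pair]
        refine ⟨m, n, ?_⟩
        have hmC : (A x : ℂ) = (p:ℕ) * (m:ℂ) := by exact_mod_cast congrArg (fun t : ℤ => (t : ℂ)) hm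
        have hnC : (B x : ℂ) = (p:ℕ) * (n:ℂ) := by exact_mod_cast congrArg (fun t : ℤ => (t : ℂ)) hn
        rw [hAB x]
        simp only [zsmul_eq_mul]
        push_cast
        first
        | linear_combination e₁ * hmC + e₂ * hnC
        | linear_combination -(e₁ * hmC + e₂ * hnC)
      · intro hx
        obtain ⟨m, n, hmn⟩ := AddSubgroup.mem_closure_pair.mp hx
        have hx' : (x : ℂ) = (m * (p:ℤ)) • e₁ + (n * (p:ℤ)) • e₂ := by
          rw [← hmn]
          simp only [zsmul_eq_mul]
          push_cast
          ring
        obtain ⟨hA, hB⟩ := hcoord x _ _ hx'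
        rw [hA, hB]
        constructor <;> (push_cast; rw [ZMod.natCast_self]; simp)
  -- F j ≤ L and its relindex
  have hleL : ∀ j : ℕ, F j ≤ L := by
    intro j
    rw [hF j]
    split_ifs with h
    · refine (AddSubgroup.closure_le _).mpr ?_
      rintro z hz
      simp only [Set.mem_insert_iff, Set.mem_singleton_iff] at hz
      rcases hz with rfl | rfl
      · exact L.add_mem he₁ (L.zsmul_mem he₂ _)
      · exact L.zsmul_mem he₂ _
    · refine (AddSubgroup.closure_le _).mpr ?_
      rintro z hz
      simp only [Set.mem_insert_iff, Set.mem_singleton_iff] at hz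
      rcases hz with rfl | rfl
      · exact L.zsmul_mem he₁ _
      · exact he₂
  have hrelF : ∀ j : ℕ, (F j).relIndex L = p := by
    intro j
    rw [hF j]
    split_ifs with h
    · exact hrelpair j
    · exact hrellast
  -- sandwich lemma
  have sandwich : ∀ K L' : AddSubgroup ℂ, K ≤ L' → L' ≤ L → K.relIndex L = p →
      L'.relIndex L = p → L' = K := by
    intro K L' h1 h2 hK hL'
    have hm := AddSubgroup.relIndex_mul_relIndex K L' L h1 h2
    rw [hK, hL'] at hm
    have h3 : K.relIndex L' = 1 := by
      have : K.relIndex L' * p = 1 * p := by rw [hm, one_mul]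
      exact Nat.eq_of_mul_eq_mul_right hp.pos this
    exact le_antisymm (AddSubgroup.relIndex_eq_one.mp h3) h1
  constructor
  · -- injectivity
    have claim1 : ∀ j k : ℕ, j < p → k < p → F j = F k → j = k := by
      intro j k hj hk hjk
      have hmem : e₁ + (j:ℤ) • e₂ ∈ F k := by
        rw [← hjk, hF j, if_pos hj]
        exact AddSubgroup.subset_closure (by simp)
      rw [hF k, if_pos hk] at hmem
      obtain ⟨m, n, hmn⟩ := AddSubgroup.mem_closure_pair.mp hmem
      have heq : (m : ℤ) • e₁ + (m * (k:ℤ) + n * (p:ℤ)) • e₂ = (1:ℤ) • e₁ + (j:ℤ) • e₂ := by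
        simp only [zsmul_eq_mul] at hmn ⊢
        push_cast at hmn ⊢
        first
        | linear_combination hmn
        | linear_combination -(hmn)
      obtain ⟨h1, h2⟩ := uniq _ _ _ _ heq
      have hd : (p:ℤ) ∣ (j:ℤ) - (k:ℤ) := ⟨n, by rw [h1] at h2; linarith⟩
      have := Int.eq_zero_of_abs_lt_dvd hd (abs_lt.mpr ⟨by omega, by omega⟩)
      omega
    have claim2 : ∀ j : ℕ, j < p → F j ≠ F p := by
      intro j hj h
      have hmem : e₂ ∈ F j := by
        rw [h, hF p, if_neg (lt_irrefl p)]
        exact AddSubgroup.subset_closure (by simp)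
      rw [hF j, if_pos hj] at hmem
      obtain ⟨m, n, hmn⟩ := AddSubgroup.mem_closure_pair.mp hmem
      have heq : (m : ℤ) • e₁ + (m * (j:ℤ) + n * (p:ℤ)) • e₂ = (0:ℤ) • e₁ + (1:ℤ) • e₂ := by
        simp only [zsmul_eq_mul] at hmn ⊢
        push_cast at hmn ⊢
        first
        | linear_combination hmn
        | linear_combination -(hmn)
      obtain ⟨h1, h2⟩ := uniq _ _ _ _ heq
      rw [h1] at h2
      have hd : (p:ℤ) ∣ 1 := ⟨n, by linarith⟩
      have := Int.le_of_dvd one_pos hd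
      omega
    intro j hj k hk hjk
    simp only [Set.mem_Iic] at hj hk
    rcases lt_or_eq_of_le hj with hj' | rfl
    · rcases lt_or_eq_of_le hk with hk' | rfl
      · exact claim1 j k hj' hk' hjk
      · exact absurd hjk (claim2 j hj')
    · rcases lt_or_eq_of_le hk with hk' | rfl
      · exact absurd hjk.symm (claim2 k hk')
      · rfl
  · apply Set.Subset.antisymm
    · rintro L' ⟨hle', hrel'⟩
      -- p-multiples lie in L'
      have hpm : ∀ x : ↥L, (p:ℤ) • (x:ℂ) ∈ L' := by
        intro x
        have h1 : (L'.addSubgroupOf L).index = p := hrel'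
        have h2 := AddSubgroup.nsmul_index_mem (L'.addSubgroupOf L) x
        rw [h1] at h2
        have h3 : ((p • x : ↥L) : ℂ) ∈ L' := h2
        have h4 : ((p • x : ↥L) : ℂ) = (p:ℤ) • (x:ℂ) := by
          push_cast
          rw [natCast_zsmul]
        rwa [h4] at h3
      have hpe₁ : (p:ℤ) • e₁ ∈ L' := hpm ⟨e₁, he₁⟩
      have hpe₂ : (p:ℤ) • e₂ ∈ L' := hpm ⟨e₂, he₂⟩
      by_cases hc1 : ∃ x : ↥L, (x:ℂ) ∈ L' ∧ ¬ (p:ℤ) ∣ A x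
      · -- case: some element with first coordinate prime to p
        obtain ⟨x, hxL', hxa⟩ := hc1
        obtain ⟨c, k, hck⟩ := hinv (A x) hxa
        obtain ⟨j, q, hjp, hq⟩ := hmod (c * B x)
        have hmem : e₁ + (j:ℤ) • e₂ ∈ L' := by
          have h1 : c • (x:ℂ) - k • ((p:ℤ) • e₁) - q • ((p:ℤ) • e₂) ∈ L' :=
            sub_mem (sub_mem (AddSubgroup.zsmul_mem L' hxL' c)
              (AddSubgroup.zsmul_mem L' hpe₁ k)) (AddSubgroup.zsmul_mem L' hpe₂ q)
          have hkC : (c:ℂ) * (A x : ℤ) = 1 + (p:ℕ) * (k:ℂ) := by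
            exact_mod_cast congrArg (fun t : ℤ => (t : ℂ)) hck
          have hqC : (c:ℂ) * (B x : ℤ) = (p:ℕ) * (q:ℂ) + (j:ℕ) := by
            exact_mod_cast congrArg (fun t : ℤ => (t : ℂ)) hq
          have h2 : e₁ + (j:ℤ) • e₂ = c • (x:ℂ) - k • ((p:ℤ) • e₁) - q • ((p:ℤ) • e₂) := by
            rw [hAB x]
            simp only [zsmul_eq_mul]
            push_cast
            first
            | linear_combination e₁ * hkC + e₂ * hqC
            | linear_combination -(e₁ * hkC + e₂ * hqC)
          rw [h2]
          exact h1
        have hFle' : F j ≤ L' := by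
          rw [hF j, if_pos hjp]
          refine (AddSubgroup.closure_le _).mpr ?_
          rintro z hz
          simp only [Set.mem_insert_iff, Set.mem_singleton_iff] at hz
          rcases hz with rfl | rfl
          · exact hmem
          · exact hpe₂
        exact ⟨j, hjp.le, (sandwich (F j) L' hFle' hle' (hrelF j) hrel').symm⟩
      · push_neg at hc1
        by_cases hc2 : ∃ x : ↥L, (x:ℂ) ∈ L' ∧ ¬ (p:ℤ) ∣ B x
        · -- case: F p
          obtain ⟨x, hxL', hxb⟩ := hc2
          obtain ⟨m, hm⟩ := hc1 x hxL'
          obtain ⟨c, k, hck⟩ := hinv (B x) hxb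
          have hmC : (A x : ℂ) = (p:ℕ) * (m:ℂ) := by
            exact_mod_cast congrArg (fun t : ℤ => (t : ℂ)) hm
          have hkC : (c:ℂ) * (B x : ℤ) = 1 + (p:ℕ) * (k:ℂ) := by
            exact_mod_cast congrArg (fun t : ℤ => (t : ℂ)) hck
          have hmem : e₂ ∈ L' := by
            have h1 : c • ((x:ℂ) - m • ((p:ℤ) • e₁)) - k • ((p:ℤ) • e₂) ∈ L' :=
              sub_mem (AddSubgroup.zsmul_mem L'
                (sub_mem hxL' (AddSubgroup.zsmul_mem L' hpe₁ m)) c)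
                (AddSubgroup.zsmul_mem L' hpe₂ k)
            have h2 : e₂ = c • ((x:ℂ) - m • ((p:ℤ) • e₁)) - k • ((p:ℤ) • e₂) := by
              rw [hAB x]
              simp only [zsmul_eq_mul]
              push_cast
              first
              | linear_combination (c:ℂ) * e₁ * hmC + e₂ * hkC
              | linear_combination -((c:ℂ) * e₁ * hmC + e₂ * hkC)
            rw [h2]
            exact h1
          have hFle' : F p ≤ L' := by
            rw [hF p, if_neg (lt_irrefl p)]
            refine (AddSubgroup.closure_le _).mpr ?_
            rintro z hz
            simp only [Set.mem_insert_iff, Set.mem_singleton_iff] at hz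
            rcases hz with rfl | rfl
            · exact hpe₁
            · exact hmem
          exact ⟨p, le_refl p, (sandwich (F p) L' hFle' hle' (hrelF p) hrel').symm⟩
        · -- impossible case : L' ⊆ pL
          exfalso
          push_neg at hc2
          set Pl := AddSubgroup.closure {(p:ℤ) • e₁, (p:ℤ) • e₂} with hPl
          have hPlL : Pl ≤ L := by
            refine (AddSubgroup.closure_le _).mpr ?_
            rintro z hz
            simp only [Set.mem_insert_iff, Set.mem_singleton_iff] at hz
            rcases hz with rfl | rfl
            · exact L.zsmul_mem he₁ _
            · exact L.zsmul_mem he₂ _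
          have hsub : L' ≤ Pl := by
            intro z hz
            have hzL : z ∈ L := hle' hz
            obtain ⟨m, hm⟩ := hc1 ⟨z, hzL⟩ hz
            obtain ⟨n, hn⟩ := hc2 ⟨z, hzL⟩ hz
            rw [hPl, AddSubgroup.mem_closure_pair]
            refine ⟨m, n, ?_⟩
            have hmC : (A ⟨z, hzL⟩ : ℂ) = (p:ℕ) * (m:ℂ) := by
              exact_mod_cast congrArg (fun t : ℤ => (t : ℂ)) hm
            have hnC : (B ⟨z, hzL⟩ : ℂ) = (p:ℕ) * (n:ℂ) := by
              exact_mod_cast congrArg (fun t : ℤ => (t : ℂ)) hn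
            have hz' : z = (A ⟨z, hzL⟩ : ℤ) • e₁ + (B ⟨z, hzL⟩ : ℤ) • e₂ := hAB ⟨z, hzL⟩
            rw [hz']
            simp only [zsmul_eq_mul]
            push_cast
            first
            | linear_combination e₁ * hmC + e₂ * hnC
            | linear_combination -(e₁ * hmC + e₂ * hnC)
          have hm2 := AddSubgroup.relIndex_mul_relIndex L' Pl L hsub hPlL
          rw [hrel', hrelpl] at hm2
          rcases Nat.eq_zero_or_pos (L'.relIndex Pl) with h0 | h1
          · rw [h0, zero_mul] at hm2
            omega
          · have h2 : p * p ≤ L'.relIndex Pl * (p * p) := Nat.le_mul_of_pos_left _ h1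
            rw [hm2] at h2
            nlinarith
    · rintro L'' ⟨j, hj, rfl⟩
      exact ⟨hleL j, hrelF j⟩
end
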